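/- Consider the two-player hybrid power control and sensing game with utilities u_i = (1 − α·𝟙[d_i = S]) · R_i f(SINR_i)/p_i on action sets {S,NS} × (0,∞), where SINR_i = p_i g_i/(p_j g_j + σ²), α ∈ (0,1), R_i, g_i, σ² > 0, f(x) > 0 for x > 0. Suppose β* ∈ (0,1) is the strict maximizer of f(x)/x on (0,∞), i.e., f(x)/x < f(β*)/β* for all x > 0 with x ≠ β*. Then the hybrid game has a unique pure Nash equilibrium, namely ((NS, p₁*), (NS, p₂*)) with p_i* = (σ²/g_i)·β*/(1−β*), which is exactly the Nash equilibrium of the power control game without sensing. -/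

import Mathlib

inductive SenseAction
  | S
  | NS
  deriving DecidableEq

open SenseAction

lemma hyb_aux (a R g D β : ℝ) (f : ℝ → ℝ)
    (ha0 : 0 < a) (ha1 : a < 1) (hR : 0 < R) (hg : 0 < g) (hD : 0 < D) (hβ : 0 < β)
    (hf : ∀ x : ℝ, 0 < x → 0 < f x)
    (hmax : ∀ x : ℝ, 0 < x → x ≠ β → f x / x < f β / β)
    (d : SenseAction) (p : ℝ) (hp : 0 < p) :
    (1 - a * (if d = S then 1 else 0)) * (R * f (p * g / D) / p)
      ≤ R * f β / (β * D / g)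
    ∧ ((d, p) ≠ (NS, β * D / g) →
      (1 - a * (if d = S then 1 else 0)) * (R * f (p * g / D) / p)
        < R * f β / (β * D / g)) := by
  set x := p * g / D with hxdef
  have hx : 0 < x := by positivity
  have hfx := hf x hx
  have hfβ := hf β hβ
  have hW : R * f x / p = R * ((f x / x) * (g / D)) := by
    rw [hxdef]; field_simp
  have hWmax : R * f β / (β * D / g) = R * ((f β / β) * (g / D)) := by
    field_simp
  have hratio : f x / x ≤ f β / β := by
    rcases eq_or_ne x β with h | h
    · rw [h]
    · exact (hmax x hx h).le
  have hWle : R * f x / p ≤ R * f β / (β * D / g) := by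
    rw [hW, hWmax]
    have hgD : (0:ℝ) < g / D := by positivity
    gcongr
  have hpeq : p = β * D / g ↔ x = β := by
    rw [hxdef]
    constructor
    · rintro rfl; field_simp
    · intro h
      have : p * g = β * D := by
        field_simp at h; linarith
      field_simp
      linarith
  have hWlt : p ≠ β * D / g → R * f x / p < R * f β / (β * D / g) := by
    intro hne
    have hxβ : x ≠ β := fun h => hne (hpeq.mpr h)
    rw [hW, hWmax]
    have hgD : (0:ℝ) < g / D := by positivity
    have hlt := hmax x hx hxβ
    have := mul_lt_mul_of_pos_right hlt hgD
    exact mul_lt_mul_of_pos_left this hR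
  cases d with
  | S =>
    simp only [if_pos rfl, if_true]
    have hVpos : 0 < R * f x / p := by positivity
    have haV : 0 < a * (R * f x / p) := mul_pos ha0 hVpos
    constructor
    · nlinarith
    · intro _; nlinarith
  | NS =>
    simp only [reduceCtorEq, if_neg (by simp : (NS : SenseAction) ≠ S)]
    constructor
    · simpa using hWle
    · intro hne
      have hpne : p ≠ β * D / g := by
        intro h; exact hne (by rw [h])
      simpa using hWlt hpne

theorem stmt16 (α R1 R2 g1 g2 σ2 β : ℝ)
    (hα0 : 0 < α) (hα1 : α < 1) (hR1 : 0 < R1) (hR2 : 0 < R2)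
    (hg1 : 0 < g1) (hg2 : 0 < g2) (hσ : 0 < σ2)
    (hβ0 : 0 < β) (hβ1 : β < 1)
    (f : ℝ → ℝ) (hf : ∀ x : ℝ, 0 < x → 0 < f x)
    (hmax : ∀ x : ℝ, 0 < x → x ≠ β → f x / x < f β / β)
    (u1 u2 : SenseAction × ℝ → SenseAction × ℝ → ℝ)
    (hu1 : ∀ a1 a2, u1 a1 a2 =
      (1 - α * (if a1.1 = S then 1 else 0))
        * (R1 * f (a1.2 * g1 / (a2.2 * g2 + σ2)) / a1.2))
    (hu2 : ∀ a1 a2, u2 a1 a2 =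
      (1 - α * (if a2.1 = S then 1 else 0))
        * (R2 * f (a2.2 * g2 / (a1.2 * g1 + σ2)) / a2.2))
    (p1s p2s : ℝ)
    (hp1 : p1s = σ2 / g1 * (β / (1 - β)))
    (hp2 : p2s = σ2 / g2 * (β / (1 - β))) :
    ∀ a1 a2 : SenseAction × ℝ, 0 < a1.2 → 0 < a2.2 →
      (((∀ b1 : SenseAction × ℝ, 0 < b1.2 → u1 b1 a2 ≤ u1 a1 a2) ∧
        (∀ b2 : SenseAction × ℝ, 0 < b2.2 → u2 a1 b2 ≤ u2 a1 a2)) ↔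
        (a1 = (NS, p1s) ∧ a2 = (NS, p2s))) := by
  have h1β : (0:ℝ) < 1 - β := by linarith
  have hg1' : g1 ≠ 0 := ne_of_gt hg1
  have hg2' : g2 ≠ 0 := ne_of_gt hg2
  have h1β' : (1:ℝ) - β ≠ 0 := ne_of_gt h1β
  rintro ⟨d1, p1⟩ ⟨d2, p2⟩ hp1pos hp2pos
  have hp1p : (0:ℝ) < p1 := hp1pos
  have hp2p : (0:ℝ) < p2 := hp2pos
  have hD1 : (0:ℝ) < p2 * g2 + σ2 := by positivity
  have hD2 : (0:ℝ) < p1 * g1 + σ2 := by positivity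
  set D1 := p2 * g2 + σ2 with hD1def
  set D2 := p1 * g1 + σ2 with hD2def
  have hfβ := hf β hβ0
  -- the maximizer values
  have hb1max : u1 (NS, β * D1 / g1) (d2, p2) = R1 * f β / (β * D1 / g1) := by
    rw [hu1]
    have harg : β * D1 / g1 * g1 / (p2 * g2 + σ2) = β := by
      rw [← hD1def]; field_simp
    simp only [harg]
    simp
  have hb2max : u2 (d1, p1) (NS, β * D2 / g2) = R2 * f β / (β * D2 / g2) := by
    rw [hu2]
    have harg : β * D2 / g2 * g2 / (p1 * g1 + σ2) = β := by
      rw [← hD2def]; field_simp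
    simp only [harg]
    simp
  have hb1pos : (0:ℝ) < β * D1 / g1 := by positivity
  have hb2pos : (0:ℝ) < β * D2 / g2 := by positivity
  constructor
  · rintro ⟨H1, H2⟩
    -- player 1 must play (NS, β*D1/g1)
    have key1 : (d1, p1) = (NS, β * D1 / g1) := by
      by_contra hne
      have hlt := (hyb_aux α R1 g1 D1 β f hα0 hα1 hR1 hg1 hD1 hβ0 hf hmax d1 p1 hp1p).2 hne
      have hle := H1 (NS, β * D1 / g1) hb1pos
      rw [hb1max, hu1] at hle
      simp only at hle
      rw [hD1def] at hlt
      exact absurd hle (not_le.mpr (by rw [hD1def]; exact hlt))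
    have key2 : (d2, p2) = (NS, β * D2 / g2) := by
      by_contra hne
      have hlt := (hyb_aux α R2 g2 D2 β f hα0 hα1 hR2 hg2 hD2 hβ0 hf hmax d2 p2 hp2p).2 hne
      have hle := H2 (NS, β * D2 / g2) hb2pos
      rw [hb2max, hu2] at hle
      simp only at hle
      exact absurd hle (not_le.mpr (by rw [hD2def]; exact hlt))
    obtain ⟨hd1, hp1e⟩ := Prod.mk.injEq .. ▸ key1
    obtain ⟨hd2, hp2e⟩ := Prod.mk.injEq .. ▸ key2
    have e1 : p1 * g1 = β * (p2 * g2 + σ2) := by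
      rw [← hD1def]
      field_simp [hp1e]
      rw [hp1e]; field_simp
    have e2 : p2 * g2 = β * (p1 * g1 + σ2) := by
      rw [← hD2def]
      field_simp [hp2e]
      rw [hp2e]; field_simp
    have h0 : (1 + β) * (p1 * g1 - p2 * g2) = 0 := by linear_combination e1 - e2
    have h12 : p1 * g1 = p2 * g2 := by
      have h1βne : (1:ℝ) + β ≠ 0 := by positivity
      have := (mul_eq_zero.mp h0).resolve_left h1βne
      linarith
    have e1' : p1 * (g1 * (1 - β)) = σ2 * β := by linear_combination e1 - β * h12
    have e2' : p2 * (g2 * (1 - β)) = σ2 * β := by linear_combination e2 + β * h12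
    have hp1f : p1 = p1s := by
      rw [hp1]
      field_simp
      linear_combination e1'
    have hp2f : p2 = p2s := by
      rw [hp2]
      field_simp
      linear_combination e2'
    exact ⟨by rw [hd1, hp1f], by rw [hd2, hp2f]⟩
  · rintro ⟨h1, h2⟩
    obtain ⟨hd1, hp1e⟩ := Prod.mk.injEq .. ▸ h1
    obtain ⟨hd2, hp2e⟩ := Prod.mk.injEq .. ▸ h2
    subst hd1 hd2 hp1e hp2e
    have hq1 : p1 = β * D1 / g1 := by
      rw [hD1def, hp1, hp2]; field_simp; ring
    have hq2 : p2 = β * D2 / g2 := by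
      rw [hD2def, hp1, hp2]; field_simp; ring
    have harg1 : p1 * g1 / D1 = β := by rw [hq1]; field_simp
    have harg2 : p2 * g2 / D2 = β := by rw [hq2]; field_simp
    constructor
    · rintro ⟨d, p⟩ hp
      have hpp : (0:ℝ) < p := hp
      have hle := (hyb_aux α R1 g1 D1 β f hα0 hα1 hR1 hg1 hD1 hβ0 hf hmax d p hpp).1
      rw [hu1, hu1]
      simp only [← hD1def]
      rw [← hq1] at hle
      simpa [harg1] using hle
    · rintro ⟨d, p⟩ hp
      have hpp : (0:ℝ) < p := hp
      have hle := (hyb_aux α R2 g2 D2 β f hα0 hα1 hR2 hg2 hD2 hβ0 hf hmax d p hpp).1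
      rw [hu2, hu2]
      simp only [← hD2def]
      rw [← hq2] at hle
      simpa [harg2] using hle
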